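/- The quantization-based LHS estimator μ_QLHS = Σ_{i=1}^N p_i f(U_i, V_{π(i)}), where π is a uniformly random permutation of {1,...,N} independent of the U_i and V_j, is unbiased: E[μ_QLHS] = E[f(X,Y)]. -/

import Mathlib

open MeasureTheory ProbabilityTheory

private lemma perm_fiber_card {N : ℕ} (i j : Fin N) :
    (Finset.univ.filter (fun σ : Equiv.Perm (Fin N) => σ i = j)).card
      = (Finset.univ.filter (fun σ : Equiv.Perm (Fin N) => σ i = i)).card := by
  classical
  apply Finset.card_bij' (fun σ _ => Equiv.swap i j * σ) (fun σ _ => Equiv.swap i j * σ)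
  · intro σ hσ
    simp only [Finset.mem_filter, Finset.mem_univ, true_and] at hσ ⊢
    simp [Equiv.Perm.mul_apply, hσ]
  · intro σ hσ
    simp only [Finset.mem_filter, Finset.mem_univ, true_and] at hσ ⊢
    simp [Equiv.Perm.mul_apply, hσ]
  · intro σ _; simp [← mul_assoc]
  · intro σ _; simp [← mul_assoc]

private lemma perm_sum_eq {N : ℕ} [NeZero N] (i : Fin N) (F : Fin N → ℝ) :
    ((N.factorial : ℝ))⁻¹ * ∑ σ : Equiv.Perm (Fin N), F (σ i) = (1 / N : ℝ) * ∑ j, F j := by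
  classical
  set c := (Finset.univ.filter (fun σ : Equiv.Perm (Fin N) => σ i = i)).card with hcdef
  have hfiber : ∀ j : Fin N,
      (Finset.univ.filter (fun σ : Equiv.Perm (Fin N) => σ i = j)).card = c :=
    fun j => perm_fiber_card i j
  have hNc : N * c = N.factorial := by
    have h1 : (Finset.univ : Finset (Equiv.Perm (Fin N))).card
        = ∑ j : Fin N, (Finset.univ.filter (fun σ : Equiv.Perm (Fin N) => σ i = j)).card :=
      Finset.card_eq_sum_card_fiberwise (fun σ _ => Finset.mem_univ _)
    have h2 : (Finset.univ : Finset (Equiv.Perm (Fin N))).card = N.factorial := by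
      simp [Finset.card_univ, Fintype.card_perm]
    rw [h2] at h1
    simp only [hfiber, Finset.sum_const, Finset.card_univ, Fintype.card_fin, smul_eq_mul] at h1
    omega
  have hsum : ∑ σ : Equiv.Perm (Fin N), F (σ i) = (c : ℝ) * ∑ j, F j := by
    have himg : Finset.image (fun σ : Equiv.Perm (Fin N) => σ i) Finset.univ = Finset.univ := by
      apply Finset.eq_univ_of_forall
      intro j
      exact Finset.mem_image.mpr ⟨Equiv.swap i j, Finset.mem_univ _, by simp⟩
    rw [Finset.sum_comp F (fun σ : Equiv.Perm (Fin N) => σ i), himg]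
    simp [hfiber, Finset.mul_sum]
  rw [hsum]
  have hN : (N : ℝ) ≠ 0 := Nat.cast_ne_zero.mpr (NeZero.ne N)
  have hfac : (N.factorial : ℝ) ≠ 0 := Nat.cast_ne_zero.mpr (Nat.factorial_ne_zero N)
  have hNc' : (N : ℝ) * (c : ℝ) = (N.factorial : ℝ) := by exact_mod_cast congrArg (Nat.cast (R := ℝ)) hNc
  have hc' : (c : ℝ) = (N.factorial : ℝ) / N := by
    rw [eq_div_iff hN]; linarith [hNc']
  rw [hc']
  field_simp
set_option maxHeartbeats 1000000 in
theorem stmt_3 {Ω : Type*} [MeasurableSpace Ω] (P : Measure Ω) [IsProbabilityMeasure P]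
    {s m N : ℕ} [NeZero N]
    [MeasurableSpace (Equiv.Perm (Fin N))] [MeasurableSingletonClass (Equiv.Perm (Fin N))]
    (X : Ω → (Fin s → ℝ)) (Y : Ω → (Fin m → ℝ)) (hX : Measurable X) (hY : Measurable Y)
    (hXY : IndepFun X Y P)
    (f : (Fin s → ℝ) → (Fin m → ℝ) → ℝ)
    (hf : Measurable (fun p : (Fin s → ℝ) × (Fin m → ℝ) => f p.1 p.2))
    (hfint : Integrable (fun ω => f (X ω) (Y ω)) P)
    (C : Fin N → Set (Fin s → ℝ)) (hC : ∀ i, MeasurableSet (C i))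
    (hpart : ∀ x, ∃! i, x ∈ C i)
    (hpos : ∀ i, 0 < P (X ⁻¹' (C i)))
    (U : Fin N → Ω → (Fin s → ℝ)) (hUmeas : ∀ i, Measurable (U i))
    (hU : ∀ i, Measure.map (U i) P = (Measure.map X P)[|C i])
    (V : Fin N → Ω → (Fin m → ℝ)) (hVmeas : ∀ j, Measurable (V j))
    -- LHS property of the sample `V` of `Y` : marginal averages match `Y`
    (hV : ∀ g : (Fin m → ℝ) → ℝ, Integrable (fun ω => g (Y ω)) P →
      (∀ j, Integrable (fun ω => g (V j ω)) P) →
      (1 / N : ℝ) * ∑ j, ∫ ω, g (V j ω) ∂P = ∫ ω, g (Y ω) ∂P)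
    (hUV : ∀ i j, IndepFun (U i) (V j) P)
    (hintUV : ∀ i j, Integrable (fun ω => f (U i ω) (V j ω)) P)
    (π : Ω → Equiv.Perm (Fin N)) (hπmeas : Measurable π)
    -- `π` is uniform on the symmetric group
    (hπ : ∀ a : Equiv.Perm (Fin N), P (π ⁻¹' {a}) = ((Nat.factorial N : ENNReal))⁻¹)
    -- `π` is independent of `(U, V)`
    (hπindep : IndepFun π (fun ω => (fun i => U i ω, fun j => V j ω)) P)
    (hest : Integrable (fun ω => ∑ i, (P (X ⁻¹' (C i))).toReal * f (U i ω) (V (π ω i) ω)) P) :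
    ∫ ω, ∑ i, (P (X ⁻¹' (C i))).toReal * f (U i ω) (V (π ω i) ω) ∂P
      = ∫ ω, f (X ω) (Y ω) ∂P := by
  classical
  set μ := Measure.map X P with hμdef
  set ν := Measure.map Y P with hνdef
  haveI : IsProbabilityMeasure μ := Measure.isProbabilityMeasure_map hX.aemeasurable
  haveI : IsProbabilityMeasure ν := Measure.isProbabilityMeasure_map hY.aemeasurable
  have hpC : ∀ i, P (X ⁻¹' (C i)) = μ (C i) := fun i => (Measure.map_apply hX (hC i)).symm
  have hμC0 : ∀ i, μ (C i) ≠ 0 := fun i => by rw [← hpC]; exact (hpos i).ne'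
  have hμCt : ∀ i, μ (C i) ≠ ⊤ := fun i => measure_ne_top μ _
  have hUi : ∀ i, Measure.map (U i) P = (μ (C i))⁻¹ • μ.restrict (C i) := fun i => hU i
  -- pointwise relation between the two "conditional expectation in u" functions
  have hgh : ∀ i v, (∫ u, f u v ∂(Measure.map (U i) P))
      = ((μ (C i)).toReal)⁻¹ * ∫ u, f u v ∂(μ.restrict (C i)) := by
    intro i v
    rw [hUi i, integral_smul_measure, smul_eq_mul, ENNReal.toReal_inv]
  -- joint law of (X, Y)
  have hXYlaw : Measure.map (fun ω => (X ω, Y ω)) P = μ.prod ν :=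
    (indepFun_iff_map_prod_eq_prod_map_map hX.aemeasurable hY.aemeasurable).mp hXY
  have hfprod : Integrable (fun q : (Fin s → ℝ) × (Fin m → ℝ) => f q.1 q.2) (μ.prod ν) := by
    rw [← hXYlaw]
    exact (integrable_map_measure hf.aestronglyMeasurable (hX.prodMk hY).aemeasurable).mpr hfint
  have hfrestrict : ∀ i, Integrable (fun q : (Fin s → ℝ) × (Fin m → ℝ) => f q.1 q.2)
      ((μ.restrict (C i)).prod ν) := by
    intro i
    rw [Measure.restrict_prod_eq_prod_univ]
    exact hfprod.mono_measure Measure.restrict_le_self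
  have hhint : ∀ i, Integrable (fun v => ∫ u, f u v ∂(μ.restrict (C i))) ν := fun i =>
    (hfrestrict i).integral_prod_right
  have hgmeas : ∀ i, StronglyMeasurable (fun v => ∫ u, f u v ∂(Measure.map (U i) P)) := by
    intro i
    haveI : IsProbabilityMeasure (Measure.map (U i) P) :=
      Measure.isProbabilityMeasure_map (hUmeas i).aemeasurable
    exact hf.stronglyMeasurable.integral_prod_left'
  -- joint law of (U i, V j)
  have hlawUV : ∀ i j, Measure.map (fun ω => (U i ω, V j ω)) P
      = (Measure.map (U i) P).prod (Measure.map (V j) P) := fun i j =>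
    (indepFun_iff_map_prod_eq_prod_map_map (hUmeas i).aemeasurable
      (hVmeas j).aemeasurable).mp (hUV i j)
  have hfprodUV : ∀ i j, Integrable (fun q : (Fin s → ℝ) × (Fin m → ℝ) => f q.1 q.2)
      ((Measure.map (U i) P).prod (Measure.map (V j) P)) := by
    intro i j
    rw [← hlawUV]
    exact (integrable_map_measure hf.aestronglyMeasurable
      ((hUmeas i).prodMk (hVmeas j)).aemeasurable).mpr (hintUV i j)
  have haij : ∀ i j, ∫ ω, f (U i ω) (V j ω) ∂P
      = ∫ ω, (∫ u, f u (V j ω) ∂(Measure.map (U i) P)) ∂P := by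
    intro i j
    haveI : IsProbabilityMeasure (Measure.map (U i) P) :=
      Measure.isProbabilityMeasure_map (hUmeas i).aemeasurable
    haveI : IsProbabilityMeasure (Measure.map (V j) P) :=
      Measure.isProbabilityMeasure_map (hVmeas j).aemeasurable
    have h1 : ∫ ω, f (U i ω) (V j ω) ∂P
        = ∫ q : (Fin s → ℝ) × (Fin m → ℝ), f q.1 q.2
            ∂(Measure.map (fun ω => (U i ω, V j ω)) P) := by
      rw [integral_map ((hUmeas i).prodMk (hVmeas j)).aemeasurable hf.aestronglyMeasurable]
    rw [h1, hlawUV i j, integral_prod_symm _ (hfprodUV i j)]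
    exact (integral_map (hVmeas j).aemeasurable (hgmeas i).aestronglyMeasurable)
  have hgVint : ∀ i j, Integrable (fun ω => ∫ u, f u (V j ω) ∂(Measure.map (U i) P)) P := by
    intro i j
    haveI : IsProbabilityMeasure (Measure.map (U i) P) :=
      Measure.isProbabilityMeasure_map (hUmeas i).aemeasurable
    haveI : IsProbabilityMeasure (Measure.map (V j) P) :=
      Measure.isProbabilityMeasure_map (hVmeas j).aemeasurable
    have h1 : Integrable (fun v => ∫ u, f u v ∂(Measure.map (U i) P)) (Measure.map (V j) P) :=
      (hfprodUV i j).integral_prod_right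
    exact (integrable_map_measure (hgmeas i).aestronglyMeasurable (hVmeas j).aemeasurable).mp h1
  have hgYint : ∀ i, Integrable (fun ω => ∫ u, f u (Y ω) ∂(Measure.map (U i) P)) P := by
    intro i
    have h1 : Integrable (fun v => ∫ u, f u v ∂(Measure.map (U i) P)) ν := by
      have h2 : Integrable (fun v => ((μ (C i)).toReal)⁻¹ * ∫ u, f u v ∂(μ.restrict (C i))) ν :=
        (hhint i).const_mul _
      exact h2.congr (Filter.Eventually.of_forall fun v => (hgh i v).symm)
    exact (integrable_map_measure (hgmeas i).aestronglyMeasurable hY.aemeasurable).mp h1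
  have hVstep : ∀ i, (1 / N : ℝ)
        * ∑ j, ∫ ω, (∫ u, f u (V j ω) ∂(Measure.map (U i) P)) ∂P
      = ∫ ω, (∫ u, f u (Y ω) ∂(Measure.map (U i) P)) ∂P := fun i =>
    hV (fun v => ∫ u, f u v ∂(Measure.map (U i) P)) (hgYint i) (fun j => hgVint i j)
  -- the permutation step
  have hπstep : ∀ i, Integrable (fun ω => f (U i ω) (V (π ω i) ω)) P ∧
      ∫ ω, f (U i ω) (V (π ω i) ω) ∂P
        = (1 / N : ℝ) * ∑ j, ∫ ω, f (U i ω) (V j ω) ∂P := by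
    intro i
    set A : Equiv.Perm (Fin N) → Ω → ℝ :=
      fun σ => (π ⁻¹' {σ}).indicator (fun _ => (1:ℝ)) with hA
    set B : Equiv.Perm (Fin N) → Ω → ℝ := fun σ ω => f (U i ω) (V (σ i) ω) with hB
    have hAmeas : ∀ σ, Measurable (A σ) := fun σ =>
      measurable_const.indicator (hπmeas (measurableSet_singleton σ))
    have hAint : ∀ σ, Integrable (A σ) P := fun σ =>
      (integrable_const (1:ℝ)).indicator (hπmeas (measurableSet_singleton σ))
    have hABindep : ∀ σ, IndepFun (A σ) (B σ) P := by
      intro σ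
      have h1 : Measurable (fun τ : Equiv.Perm (Fin N) =>
          ({σ} : Set (Equiv.Perm (Fin N))).indicator (fun _ => (1:ℝ)) τ) :=
        measurable_const.indicator (measurableSet_singleton σ)
      have h2 : Measurable (fun q : (Fin N → Fin s → ℝ) × (Fin N → Fin m → ℝ) =>
          f (q.1 i) (q.2 (σ i))) := by
        have heq : (fun q : (Fin N → Fin s → ℝ) × (Fin N → Fin m → ℝ) =>
            f (q.1 i) (q.2 (σ i)))
            = (fun p : (Fin s → ℝ) × (Fin m → ℝ) => f p.1 p.2)
              ∘ (fun q => (q.1 i, q.2 (σ i))) := rfl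
        rw [heq]
        exact hf.comp (((measurable_pi_apply i).comp measurable_fst).prodMk
          ((measurable_pi_apply (σ i)).comp measurable_snd))
      have h3 := hπindep.comp h1 h2
      exact h3
    have hABint : ∀ σ, Integrable (fun ω => A σ ω * B σ ω) P := fun σ =>
      (hABindep σ).integrable_mul (hAint σ) (hintUV i (σ i))
    have hrepr : ∀ ω, f (U i ω) (V (π ω i) ω) = ∑ σ : Equiv.Perm (Fin N), A σ ω * B σ ω := by
      intro ω
      have h4 : ∀ σ, A σ ω * B σ ω = if π ω = σ then f (U i ω) (V (σ i) ω) else 0 := by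
        intro σ
        by_cases hσ : π ω = σ <;> simp [hA, hB, Set.indicator_apply, hσ]
      rw [Finset.sum_congr rfl (fun σ _ => h4 σ), Finset.sum_ite_eq]
      simp
    have hint : Integrable (fun ω => f (U i ω) (V (π ω i) ω)) P := by
      have h5 : Integrable (fun ω => ∑ σ : Equiv.Perm (Fin N), A σ ω * B σ ω) P :=
        integrable_finset_sum _ (fun σ _ => hABint σ)
      exact h5.congr (Filter.Eventually.of_forall fun ω => (hrepr ω).symm)
    refine ⟨hint, ?_⟩
    calc ∫ ω, f (U i ω) (V (π ω i) ω) ∂P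
        = ∫ ω, ∑ σ : Equiv.Perm (Fin N), A σ ω * B σ ω ∂P :=
          integral_congr_ae (Filter.Eventually.of_forall fun ω => hrepr ω)
      _ = ∑ σ : Equiv.Perm (Fin N), ∫ ω, A σ ω * B σ ω ∂P :=
          integral_finset_sum _ (fun σ _ => hABint σ)
      _ = ∑ σ : Equiv.Perm (Fin N), ((N.factorial : ℝ))⁻¹ * ∫ ω, B σ ω ∂P := by
          refine Finset.sum_congr rfl (fun σ _ => ?_)
          have h6 : ∫ ω, A σ ω * B σ ω ∂P = (∫ ω, A σ ω ∂P) * ∫ ω, B σ ω ∂P :=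
            (hABindep σ).integral_mul_eq_mul_integral (hAmeas σ).aestronglyMeasurable
              (hintUV i (σ i)).aestronglyMeasurable
          have hIA : ∫ ω, A σ ω ∂P = ((N.factorial : ℝ))⁻¹ := by
            rw [hA]
            rw [integral_indicator_const (1:ℝ) (hπmeas (measurableSet_singleton σ))]
            rw [measureReal_def, hπ σ]
            simp [ENNReal.toReal_inv]
          rw [h6, hIA]
      _ = ((N.factorial : ℝ))⁻¹
            * ∑ σ : Equiv.Perm (Fin N), ∫ ω, f (U i ω) (V (σ i) ω) ∂P := by
          rw [Finset.mul_sum]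
      _ = (1 / N : ℝ) * ∑ j, ∫ ω, f (U i ω) (V j ω) ∂P :=
          perm_sum_eq i (fun j => ∫ ω, f (U i ω) (V j ω) ∂P)
  -- partition of μ
  have hμsum : μ = ∑ i, μ.restrict (C i) := by
    ext t ht
    rw [Measure.finset_sum_apply]
    simp_rw [Measure.restrict_apply ht]
    have h7 : t = ⋃ i ∈ Finset.univ, t ∩ C i := by
      ext x
      simp only [Set.mem_iUnion, Set.mem_inter_iff, Finset.mem_univ, exists_true_left,
        exists_prop, true_and]
      constructor
      · intro hx
        obtain ⟨i, hi, _⟩ := hpart x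
        exact ⟨i, hx, hi⟩
      · rintro ⟨i, hx, _⟩
        exact hx
    have hdisj : ((Finset.univ : Finset (Fin N)) : Set (Fin N)).PairwiseDisjoint
        (fun i => t ∩ C i) := by
      intro i _ j _ hij
      refine Set.disjoint_left.mpr fun {x} hx hx' => ?_
      exact hij ((hpart x).unique hx.2 hx'.2)
    conv_lhs => rw [h7]
    exact measure_biUnion_finset hdisj (fun i _ => ht.inter (hC i))
  -- main assembly
  have hmain : ∫ ω, ∑ i, (P (X ⁻¹' (C i))).toReal * f (U i ω) (V (π ω i) ω) ∂P
      = ∑ i, (P (X ⁻¹' (C i))).toReal * ∫ ω, f (U i ω) (V (π ω i) ω) ∂P := by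
    rw [integral_finset_sum _ (fun i _ => ((hπstep i).1.const_mul _))]
    simp_rw [integral_const_mul]
  rw [hmain]
  have hstep2 : ∀ i, (P (X ⁻¹' (C i))).toReal * ∫ ω, f (U i ω) (V (π ω i) ω) ∂P
      = (μ (C i)).toReal * ∫ ω, (∫ u, f u (Y ω) ∂(Measure.map (U i) P)) ∂P := by
    intro i
    rw [(hπstep i).2, Finset.sum_congr rfl (fun j _ => haij i j), hVstep i, hpC i]
  rw [Finset.sum_congr rfl (fun i _ => hstep2 i)]
  -- step D
  have hgY : ∀ i, ∫ ω, (∫ u, f u (Y ω) ∂(Measure.map (U i) P)) ∂P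
      = ∫ v, (∫ u, f u v ∂(Measure.map (U i) P)) ∂ν := fun i =>
    (integral_map hY.aemeasurable (hgmeas i).aestronglyMeasurable).symm
  have hpg : ∀ i, (μ (C i)).toReal * ∫ v, (∫ u, f u v ∂(Measure.map (U i) P)) ∂ν
      = ∫ v, (∫ u, f u v ∂(μ.restrict (C i))) ∂ν := by
    intro i
    have h8 : ∫ v, (∫ u, f u v ∂(Measure.map (U i) P)) ∂ν
        = ((μ (C i)).toReal)⁻¹ * ∫ v, (∫ u, f u v ∂(μ.restrict (C i))) ∂ν := by
      simp_rw [hgh]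
      rw [integral_const_mul]
    rw [h8, ← mul_assoc, mul_inv_cancel₀ (ENNReal.toReal_ne_zero.mpr ⟨hμC0 i, hμCt i⟩), one_mul]
  calc ∑ i, (μ (C i)).toReal * ∫ ω, (∫ u, f u (Y ω) ∂(Measure.map (U i) P)) ∂P
      = ∑ i, ∫ v, (∫ u, f u v ∂(μ.restrict (C i))) ∂ν := by
        refine Finset.sum_congr rfl (fun i _ => ?_)
        rw [hgY i, hpg i]
    _ = ∫ v, ∑ i, (∫ u, f u v ∂(μ.restrict (C i))) ∂ν :=
        (integral_finset_sum _ (fun i _ => hhint i)).symm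
    _ = ∫ v, (∫ u, f u v ∂μ) ∂ν := by
        refine integral_congr_ae ?_
        filter_upwards [hfprod.prod_left_ae] with v hv
        conv_rhs => rw [hμsum]
        rw [integral_finset_sum_measure (fun i _ => hv.mono_measure Measure.restrict_le_self)]
    _ = ∫ q : (Fin s → ℝ) × (Fin m → ℝ), f q.1 q.2 ∂(μ.prod ν) :=
        (integral_prod_symm _ hfprod).symm
    _ = ∫ ω, f (X ω) (Y ω) ∂P := by
        rw [← hXYlaw, integral_map (hX.prodMk hY).aemeasurable hf.aestronglyMeasurable]
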